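/- Let n ≥ 2 be an integer, a a real number, x_k = cos(kπ/n) for 1 ≤ k ≤ n−1, and F_a(x) := (1+a)·(T_n(x) + 2 − ((x+2)/n²)·T_n′(x)) − (1/n²)·(1−x)·(n² − T_n′(x)). Then, with 𝓛_k(f;x) := (1 − x_k·x)·f(x_k) + (1 − x_k²)·(x − x_k)·f′(x_k), one has for all real x: 𝓛_k(F_a;x) = (1−x_k)·(2(1+x)(1+a+x_k) + (a−x_k)(1+x_k)) if k is even, and 𝓛_k(F_a;x) = (a+x_k)·(1+x_k)·(1+x_k−2x) if k is odd. -/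

import Mathlib

open Polynomial Real

/-- The `n`-th Chebyshev polynomial of the first kind, as a real polynomial. -/
noncomputable def chebT (n : ℕ) : Polynomial ℝ := Polynomial.Chebyshev.T ℝ (n : ℤ)

/-- `F_a(x) = (1+a)(T_n(x) + 2 - ((x+2)/n²) T_n'(x)) - (1/n²)(1-x)(n² - T_n'(x))`. -/
noncomputable def F (n : ℕ) (a x : ℝ) : ℝ :=
  (1 + a) * ((chebT n).eval x + 2 - (x + 2) / (n : ℝ) ^ 2 * (derivative (chebT n)).eval x)
    - 1 / (n : ℝ) ^ 2 * (1 - x) * ((n : ℝ) ^ 2 - (derivative (chebT n)).eval x)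

/-- `𝓛(c, f; x) = (1 - c x) f(c) + (1 - c²)(x - c) f'(c)`. -/
noncomputable def Lfun (c : ℝ) (f : ℝ → ℝ) (x : ℝ) : ℝ :=
  (1 - c * x) * f c + (1 - c ^ 2) * (x - c) * deriv f c

/-- Explicit form of `𝓛_k(F_a;·)` at the zeros `x_k = cos(kπ/n)` of `T_n'`. -/
theorem L_of_F (n : ℕ) (hn : 2 ≤ n) (a : ℝ) (k : ℕ) (hk1 : 1 ≤ k) (hk2 : k ≤ n - 1) (x : ℝ) :
    (Even k →
      Lfun (Real.cos (k * π / n)) (F n a) x =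
        (1 - Real.cos (k * π / n)) *
          (2 * (1 + x) * (1 + a + Real.cos (k * π / n))
            + (a - Real.cos (k * π / n)) * (1 + Real.cos (k * π / n)))) ∧
    (Odd k →
      Lfun (Real.cos (k * π / n)) (F n a) x =
        (a + Real.cos (k * π / n)) * (1 + Real.cos (k * π / n))
          * (1 + Real.cos (k * π / n) - 2 * x)) := by
  have hn0 : (n:ℝ) ≠ 0 := Nat.cast_ne_zero.mpr (by omega)
  set θ : ℝ := (k:ℝ) * π / n with hθdef
  set c : ℝ := Real.cos θ with hcdef
  have hkn : (k:ℝ) < n := by exact_mod_cast (by omega : k < n)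
  have hk0 : (0:ℝ) < k := by exact_mod_cast (by omega : 0 < k)
  have hθpos : 0 < θ := by positivity
  have hθlt : θ < π := by
    rw [hθdef, div_lt_iff₀ (by positivity : (0:ℝ) < n)]
    nlinarith [pi_pos]
  have hs : 0 < Real.sin θ := Real.sin_pos_of_pos_of_lt_pi hθpos hθlt
  have hnθ : (n:ℝ) * θ = k * π := by rw [hθdef]; field_simp
  have hc1 : (0:ℝ) < 1 - c^2 := by
    have h1 : 1 - c^2 = Real.sin θ ^ 2 := by
      rw [hcdef]; nlinarith [Real.sin_sq_add_cos_sq θ]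
    rw [h1]; positivity
  have hckπ : Real.cos ((k:ℝ) * π) = (-1)^k := by
    simpa using Real.cos_add_nat_mul_pi 0 k
  have hT : (chebT n).eval c = (-1)^k := by
    rw [chebT, hcdef, Polynomial.Chebyshev.T_real_cos]
    push_cast
    rw [hnθ, hckπ]
  have hT' : (derivative (chebT n)).eval c = 0 := by
    rw [chebT, Polynomial.Chebyshev.T_derivative_eq_U]
    have h := Polynomial.Chebyshev.U_real_cos θ ((n:ℤ)-1)
    push_cast at h
    have h2 : ((n:ℝ) - 1 + 1) * θ = (k:ℝ) * π := by rw [← hnθ]; ring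
    rw [h2, Real.sin_nat_mul_pi] at h
    have h3 : (Polynomial.Chebyshev.U ℝ ((n:ℤ)-1)).eval c = 0 :=
      by rw [hcdef]; exact (mul_eq_zero.mp h).resolve_right hs.ne'
    simp [h3]
  have hU2 : (Polynomial.Chebyshev.U ℝ ((n:ℤ)-2)).eval c = -(-1)^k := by
    have h := Polynomial.Chebyshev.U_real_cos θ ((n:ℤ)-2)
    push_cast at h
    have h2 : ((n:ℝ) - 2 + 1) * θ = (k:ℝ) * π - θ := by rw [← hnθ]; ring
    rw [h2, Real.sin_nat_mul_pi_sub] at h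
    rw [hcdef]
    apply mul_right_cancel₀ hs.ne'
    rw [h]; ring
  have hT1' : (derivative (Polynomial.Chebyshev.T ℝ ((n:ℤ)-1))).eval c = -(((n:ℝ)-1) * (-1)^k) := by
    rw [Polynomial.Chebyshev.T_derivative_eq_U]
    have h : (n:ℤ) - 1 - 1 = (n:ℤ) - 2 := by ring
    rw [h]
    simp [hU2]
  have hTm : (Polynomial.Chebyshev.T ℝ ((n:ℤ)-1)).eval c = (-1)^k * c := by
    rw [hcdef, Polynomial.Chebyshev.T_real_cos]
    push_cast
    have h2 : ((n:ℝ) - 1) * θ = (k:ℝ) * π - θ := by rw [← hnθ]; ring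
    rw [h2, Real.cos_nat_mul_pi_sub]
  have hT'' : (1 - c^2) * (derivative (derivative (chebT n))).eval c = -((n:ℝ)^2 * (-1)^k) := by
    have h := congr_arg derivative
      (Polynomial.Chebyshev.one_sub_X_sq_mul_derivative_T_eq_poly_in_T (R := ℝ) ((n:ℤ)-1))
    simp only [sub_add_cancel] at h
    have h2 := congr_arg (Polynomial.eval c) h
    simp only [derivative_mul, derivative_sub, derivative_one, derivative_X_pow, derivative_X,
      eval_mul, eval_sub, eval_add, eval_one, eval_pow, eval_X, eval_intCast, eval_natCast,
      Polynomial.derivative_intCast, derivative_add, eval_C, eval_zero, chebT] at h2 ⊢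
    rw [hT1', hTm] at h2
    have hTc : (Polynomial.Chebyshev.T ℝ (n:ℤ)).eval c = (-1)^k := hT
    have hT'c : (derivative (Polynomial.Chebyshev.T ℝ (n:ℤ))).eval c = 0 := hT'
    rw [hTc, hT'c] at h2
    push_cast at h2 ⊢
    linear_combination h2
  have ht2 : (derivative (derivative (chebT n))).eval c = -((n:ℝ)^2 * (-1)^k) / (1 - c^2) := by
    field_simp
    linear_combination hT''
  have hF := ((((chebT n).hasDerivAt c).add_const 2 |>.sub
      ((((hasDerivAt_id c).add_const 2).div_const ((n:ℝ)^2)).mul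
        ((derivative (chebT n)).hasDerivAt c))).const_mul (1+a)).sub
    ((((hasDerivAt_id c).const_sub 1).const_mul (1/(n:ℝ)^2)).mul
      (((derivative (chebT n)).hasDerivAt c).const_sub ((n:ℝ)^2)))
  have hd : deriv (F n a) c = _ := hF.deriv
  constructor
  · intro hk
    have he : ((-1:ℝ))^k = 1 := Even.neg_one_pow hk
    simp only [Lfun, F, hd, hT, hT', ht2, he, id]
    field_simp
    ring
  · intro hk
    have he : ((-1:ℝ))^k = -1 := Odd.neg_one_pow hk
    simp only [Lfun, F, hd, hT, hT', ht2, he, id]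
    field_simp
    ring
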